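/- Quantifier elimination for the ∃*∀*-fragment: the formula φ ≡ ∃π₁…∃π_n ∀π'₁…∀π'_m. ψ is satisfiable if and only if the ∃*-formula φ' ≡ ∃π₁…∃π_n. ⋀_{j₁=1}^{n} ⋯ ⋀_{j_m=1}^{n} ψ[π_{j₁}/π'₁]…[π_{j_m}/π'_m] is satisfiable. In particular, if Π ⊨ φ' then the finite trace set T = {Π(π_i) | 1 ≤ i ≤ n} satisfies φ. -/
import Mathlib


/-- A trace: an infinite alternating sequence of labels (sets of atomic propositions)
and atomic programs; `lab j` is the label at step `j`, `act j` the atomic program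
between steps `j` and `j+1`. -/
structure Trace (AP P : Type) where
  lab : ℕ → Set AP
  act : ℕ → P

/-- The suffix of a trace starting after `j` steps. -/
def Trace.drop {AP P : Type} (t : Trace AP P) (j : ℕ) : Trace AP P :=
  ⟨fun m => t.lab (j + m), fun m => t.act (j + m)⟩

/-- The shifted trace assignment. -/
def TAdrop {AP P : Type} {n : ℕ} (Pa : Fin n → Trace AP P) (j : ℕ) : Fin n → Trace AP P :=
  fun l => (Pa l).drop j

mutual
/-- Quantifier-free HyperPDL-Δ formulas over `n` path variables. -/
inductive QF (AP P : Type) (n : ℕ) : Type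
  | atom (a : AP) (l : Fin n) : QF AP P n
  | not (φ : QF AP P n) : QF AP P n
  | and (φ ψ : QF AP P n) : QF AP P n
  | or (φ ψ : QF AP P n) : QF AP P n
  | dia (α : Pg AP P n) (φ : QF AP P n) : QF AP P n
  | box (α : Pg AP P n) (φ : QF AP P n) : QF AP P n
  | delta (α : Pg AP P n) : QF AP P n

/-- Programs of HyperPDL-Δ (with `none` as the wildcard coordinate). -/
inductive Pg (AP P : Type) (n : ℕ) : Type
  | atom (t : Fin n → Option P) : Pg AP P n
  | eps : Pg AP P n
  | sum (a b : Pg AP P n) : Pg AP P n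
  | seq (a b : Pg AP P n) : Pg AP P n
  | star (a : Pg AP P n) : Pg AP P n
  | test (φ : QF AP P n) : Pg AP P n
end

mutual
/-- Satisfaction of a quantifier-free formula by a trace assignment. -/
def QF.Sat {AP P : Type} {n : ℕ} : QF AP P n → (Fin n → Trace AP P) → Prop
  | .atom a l, Pa => a ∈ (Pa l).lab 0
  | .not φ, Pa => ¬ φ.Sat Pa
  | .and φ ψ, Pa => φ.Sat Pa ∧ ψ.Sat Pa
  | .or φ ψ, Pa => φ.Sat Pa ∨ ψ.Sat Pa
  | .dia α φ, Pa => ∃ j, α.Rel Pa 0 j ∧ φ.Sat (TAdrop Pa j)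
  | .box α φ, Pa => ∀ j, α.Rel Pa 0 j → φ.Sat (TAdrop Pa j)
  | .delta α, Pa => ∃ k : ℕ → ℕ, k 0 = 0 ∧ (∀ i, k i ≤ k (i + 1)) ∧
      ∀ i, α.Rel Pa (k i) (k (i + 1))

/-- The relation `(Π, i, k) ∈ R(α)` (indices count steps). -/
def Pg.Rel {AP P : Type} {n : ℕ} : Pg AP P n → (Fin n → Trace AP P) → ℕ → ℕ → Prop
  | .atom t, Pa, i, k => k = i + 1 ∧ ∀ l, t l = none ∨ t l = some ((Pa l).act i)
  | .eps, _, i, k => i = k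
  | .sum a b, Pa, i, k => a.Rel Pa i k ∨ b.Rel Pa i k
  | .seq a b, Pa, i, k => ∃ j, i ≤ j ∧ j ≤ k ∧ a.Rel Pa i j ∧ b.Rel Pa j k
  | .star a, Pa, i, k => ∃ (m : ℕ) (js : Fin (m + 1) → ℕ), js 0 = i ∧ js (Fin.last m) = k ∧
      ∀ l : Fin m, js l.castSucc ≤ js l.succ ∧ a.Rel Pa (js l.castSucc) (js l.succ)
  | .test φ, Pa, i, k => i = k ∧ φ.Sat (TAdrop Pa i)
end

/-- An unsatisfiable formula. -/
def fls (AP P : Type) [Inhabited AP] (n : ℕ) (hn : 0 < n) : QF AP P n :=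
  .and (.atom default ⟨0, hn⟩) (.not (.atom default ⟨0, hn⟩))

/-- The renaming `Fin (n + m) → Fin n` substituting the universally quantified variable
`π'_i` by the existentially quantified variable `π_{j i}`. -/
def ren {n m : ℕ} (j : Fin m → Fin n) (l : Fin (n + m)) : Fin n :=
  if h : (l : ℕ) < n then ⟨l, h⟩ else j ⟨(l : ℕ) - n, by omega⟩

open Classical in
/-- Substitution on program tuples: coordinates merged by the renaming are combined,
wildcards absorbing any symbol; if two distinct concrete atomic programs are merged, the
result is the unsatisfiable program `false? · (·)`. -/
noncomputable def substTuple {P : Type} (AP : Type) [Inhabited AP] {n m : ℕ} (hn : 0 < n)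
    (j : Fin m → Fin n) (t : Fin (n + m) → Option P) : Pg AP P n :=
  if ∃ l l' : Fin (n + m), ren j l = ren j l' ∧
      ∃ σ σ' : P, t l = some σ ∧ t l' = some σ' ∧ σ ≠ σ' then
    .seq (.test (fls AP P n hn)) (.atom fun _ => none)
  else
    .atom (fun r => if h : ∃ σ : P, ∃ l, ren j l = r ∧ t l = some σ then some h.choose else none)

mutual
/-- Substitution `ψ[π_{j₁}/π'₁]…[π_{j_m}/π'_m]` on quantifier-free formulas. -/
noncomputable def QF.subst {AP P : Type} [Inhabited AP] {n m : ℕ} (hn : 0 < n)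
    (j : Fin m → Fin n) : QF AP P (n + m) → QF AP P n
  | .atom a l => .atom a (ren j l)
  | .not φ => .not (φ.subst hn j)
  | .and φ ψ => .and (φ.subst hn j) (ψ.subst hn j)
  | .or φ ψ => .or (φ.subst hn j) (ψ.subst hn j)
  | .dia α φ => .dia (α.subst hn j) (φ.subst hn j)
  | .box α φ => .box (α.subst hn j) (φ.subst hn j)
  | .delta α => .delta (α.subst hn j)

/-- Substitution on programs. -/
noncomputable def Pg.subst {AP P : Type} [Inhabited AP] {n m : ℕ} (hn : 0 < n)
    (j : Fin m → Fin n) : Pg AP P (n + m) → Pg AP P n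
  | .atom t => substTuple AP hn j t
  | .eps => .eps
  | .sum a b => .sum (a.subst hn j) (b.subst hn j)
  | .seq a b => .seq (a.subst hn j) (b.subst hn j)
  | .star a => .star (a.subst hn j)
  | .test φ => .test (φ.subst hn j)
end

theorem substTuple_rel {AP P : Type} [Inhabited AP] {n m : ℕ} (hn : 0 < n)
    (j : Fin m → Fin n) (t : Fin (n + m) → Option P) (te : Fin n → Trace AP P) (i k : ℕ) :
    (substTuple AP hn j t).Rel te i k ↔
      (Pg.atom t).Rel (fun l => te (ren j l)) i k := by
  classical
  unfold substTuple
  split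
  · next hC =>
    obtain ⟨l, l', hren, σ, σ', hl, hl', hne⟩ := hC
    simp only [Pg.Rel, QF.Sat, fls]
    constructor
    · rintro ⟨d, _, _, ⟨_, h1, h2⟩, _⟩
      exact absurd h1 h2
    · rintro ⟨hk, hall⟩
      rcases hall l with h | h
      · simp [hl] at h
      rcases hall l' with h' | h'
      · simp [hl'] at h'
      rw [hl] at h; rw [hl'] at h'
      rw [hren] at h
      rw [Option.some_inj] at h h'
      exact absurd (h.trans h'.symm) hne
  · next hC =>
    simp only [Pg.Rel]
    constructor
    · rintro ⟨hk, hall⟩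
      refine ⟨hk, fun l => ?_⟩
      rcases ht : t l with _ | σ
      · exact Or.inl rfl
      right
      have hex : ∃ σ : P, ∃ l', ren j l' = ren j l ∧ t l' = some σ := ⟨σ, l, rfl, ht⟩
      rcases hall (ren j l) with h | h
      · simp [hex] at h
      · rw [dif_pos hex] at h
        obtain ⟨l', hren', hl'⟩ := hex.choose_spec
        have : hex.choose = σ := by
          by_contra hne
          exact hC ⟨l', l, hren', hex.choose, σ, hl', ht, hne⟩
        rw [← this]; exact h
    · rintro ⟨hk, hall⟩
      refine ⟨hk, fun r => ?_⟩
      by_cases hex : ∃ σ : P, ∃ l, ren j l = r ∧ t l = some σ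
      · right
        rw [dif_pos hex]
        obtain ⟨l, hrl, htl⟩ := hex.choose_spec
        rcases hall l with h | h
        · rw [htl] at h; exact absurd h (by simp)
        · rw [htl, hrl] at h
          rw [Option.some_inj] at h ⊢
          exact h
      · left; rw [dif_neg hex]

mutual
theorem QF.sat_subst {AP P : Type} [Inhabited AP] {n m : ℕ} (hn : 0 < n)
    (j : Fin m → Fin n) : ∀ (φ : QF AP P (n + m)) (te : Fin n → Trace AP P),
    (φ.subst hn j).Sat te ↔ φ.Sat (fun l => te (ren j l))
  | .atom a l, te => Iff.rfl
  | .not φ, te => by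
      simp only [QF.subst, QF.Sat]
      exact not_congr (QF.sat_subst hn j φ te)
  | .and φ ψ, te => by
      simp only [QF.subst, QF.Sat]
      exact and_congr (QF.sat_subst hn j φ te) (QF.sat_subst hn j ψ te)
  | .or φ ψ, te => by
      simp only [QF.subst, QF.Sat]
      exact or_congr (QF.sat_subst hn j φ te) (QF.sat_subst hn j ψ te)
  | .dia α φ, te => by
      simp only [QF.subst, QF.Sat]
      exact exists_congr fun d => and_congr (Pg.rel_subst hn j α te 0 d)
        (QF.sat_subst hn j φ (TAdrop te d))
  | .box α φ, te => by
      simp only [QF.subst, QF.Sat]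
      exact forall_congr' fun d => imp_congr (Pg.rel_subst hn j α te 0 d)
        (QF.sat_subst hn j φ (TAdrop te d))
  | .delta α, te => by
      simp only [QF.subst, QF.Sat]
      exact exists_congr fun k => and_congr_right fun _ => and_congr_right fun _ =>
        forall_congr' fun i => Pg.rel_subst hn j α te (k i) (k (i + 1))

theorem Pg.rel_subst {AP P : Type} [Inhabited AP] {n m : ℕ} (hn : 0 < n)
    (j : Fin m → Fin n) : ∀ (α : Pg AP P (n + m)) (te : Fin n → Trace AP P) (i k : ℕ),
    (α.subst hn j).Rel te i k ↔ α.Rel (fun l => te (ren j l)) i k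
  | .atom t, te, i, k => substTuple_rel hn j t te i k
  | .eps, te, i, k => Iff.rfl
  | .sum a b, te, i, k => by
      simp only [Pg.subst, Pg.Rel]
      exact or_congr (Pg.rel_subst hn j a te i k) (Pg.rel_subst hn j b te i k)
  | .seq a b, te, i, k => by
      simp only [Pg.subst, Pg.Rel]
      exact exists_congr fun d => and_congr_right fun _ => and_congr_right fun _ =>
        and_congr (Pg.rel_subst hn j a te i d) (Pg.rel_subst hn j b te d k)
  | .star a, te, i, k => by
      simp only [Pg.subst, Pg.Rel]
      exact exists_congr fun mm => exists_congr fun js => and_congr_right fun _ =>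
        and_congr_right fun _ => forall_congr' fun l => and_congr_right fun _ =>
          Pg.rel_subst hn j a te (js l.castSucc) (js l.succ)
  | .test φ, te, i, k => by
      simp only [Pg.subst, Pg.Rel]
      exact and_congr_right fun _ => QF.sat_subst hn j φ (TAdrop te i)
end

theorem append_eq_ren {AP P : Type} {n m : ℕ} (te : Fin n → Trace AP P)
    (j : Fin m → Fin n) :
    Fin.append te (fun i => te (j i)) = fun l => te (ren j l) := by
  funext l
  refine Fin.addCases (motive := fun l =>
    Fin.append te (fun i => te (j i)) l = te (ren j l)) (fun i => ?_) (fun i => ?_) l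
  · show Fin.append te (fun i => te (j i)) (Fin.castAdd m i) = te (ren j (Fin.castAdd m i))
    rw [Fin.append_left]
    have : ren j (Fin.castAdd m i) = i := by
      simp only [ren, Fin.coe_castAdd, i.isLt, dif_pos]
    rw [this]
  · show Fin.append te (fun i => te (j i)) (Fin.natAdd n i) = te (ren j (Fin.natAdd n i))
    rw [Fin.append_right]
    have : ren j (Fin.natAdd n i) = j i := by
      simp only [ren, Fin.coe_natAdd]
      rw [dif_neg (by omega)]
      congr 1
      ext
      simp
    rw [this]

/-- **Quantifier elimination for the `∃*∀*`-fragment**: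
`∃π₁…π_n ∀π'₁…π'_m. ψ` is satisfiable iff the `∃*`-formula obtained by conjoining all
substitution instances `ψ[π_{j₁}/π'₁]…[π_{j_m}/π'_m]` is satisfiable; moreover, any tuple
of traces satisfying every substitution instance induces the trace set
`T = {Π(π_i) | 1 ≤ i ≤ n}` which models the original formula. -/
theorem exists_forall_fragment_sat {AP P : Type} [Inhabited AP] {n m : ℕ} (hn : 0 < n)
    (ψ : QF AP P (n + m)) :
    ((∃ T : Set (Trace AP P), T.Nonempty ∧ ∃ te : Fin n → Trace AP P,
        (∀ i, te i ∈ T) ∧ ∀ tu : Fin m → Trace AP P, (∀ i, tu i ∈ T) →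
          ψ.Sat (Fin.append te tu))
      ↔ (∃ T : Set (Trace AP P), T.Nonempty ∧ ∃ te : Fin n → Trace AP P,
        (∀ i, te i ∈ T) ∧ ∀ j : Fin m → Fin n, (ψ.subst hn j).Sat te))
    ∧ ∀ te : Fin n → Trace AP P, (∀ j : Fin m → Fin n, (ψ.subst hn j).Sat te) →
        ∀ tu : Fin m → Trace AP P, (∀ i, tu i ∈ Set.range te) →
          ψ.Sat (Fin.append te tu) := by
  classical
  have main : ∀ te : Fin n → Trace AP P, (∀ j : Fin m → Fin n, (ψ.subst hn j).Sat te) →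
      ∀ tu : Fin m → Trace AP P, (∀ i, tu i ∈ Set.range te) →
        ψ.Sat (Fin.append te tu) := by
    intro te hsub tu htu
    choose j hj using htu
    have htu' : tu = fun i => te (j i) := by
      funext i; exact (hj i).symm
    rw [htu', append_eq_ren]
    exact (QF.sat_subst hn j ψ te).mp (hsub j)
  refine ⟨⟨?_, ?_⟩, main⟩
  · rintro ⟨T, hT, te, hte, hψ⟩
    refine ⟨T, hT, te, hte, fun j => ?_⟩
    rw [QF.sat_subst hn j ψ te, ← append_eq_ren]
    exact hψ (fun i => te (j i)) (fun i => hte (j i))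
  · rintro ⟨T, hT, te, hte, hψ⟩
    refine ⟨Set.range te, ⟨te ⟨0, hn⟩, Set.mem_range_self _⟩, te,
      fun i => Set.mem_range_self i, fun tu htu => main te hψ tu htu⟩
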